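/- arXiv:1612.02901 — 6 statements merged into one kernel-verified Lean document; each statement's English description precedes it below -/
import Mathlib

section
/- Let g > 2 and λ ≥ 1 be integers, let M = (m_{i,j}) be a generalized Hadamard matrix GH(g,λ) over ℤ_g, and let ζ = exp(2π√(-1)/g) be the primitive g-th root of unity in ℂ. Then the (gλ)×(gλ) complex matrix H = (h_{i,j}) defined by h_{i,j} = ζ^{m_{i,j}} is an S-Hadamard matrix of order gλ. -/
open scoped Classical

/-- An `n × n` complex matrix `H` is an S-Hadamard matrix of order `n` if
(1) `H * Hᴴ = n • 1`, (2) all entries are unimodular, and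
(3) for all rows `k ≠ ℓ`, `∑ j, (H k j)² * conj ((H ℓ j)²) = 0`. -/
def IsSHadamard {n : ℕ} (H : Matrix (Fin n) (Fin n) ℂ) : Prop :=
  (H * H.conjTranspose = (n : ℂ) • 1) ∧
  (∀ i j, ‖H i j‖ = 1) ∧
  (∀ k l : Fin n, k ≠ l → ∑ j, (H k j) ^ 2 * (starRingEnd ℂ) ((H l j) ^ 2) = 0)

/-- A generalized Hadamard matrix GH(g,λ) over the cyclic group `ℤ_g`:
a `(gλ) × (gλ)` matrix over `ZMod g` such that for all distinct rows `k ≠ ℓ`,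
every element of `ℤ_g` occurs exactly `λ` times among the differences
`M k j - M ℓ j`. -/
def IsGH (g lam : ℕ) (M : Matrix (Fin (g * lam)) (Fin (g * lam)) (ZMod g)) : Prop :=
  ∀ k l : Fin (g * lam), k ≠ l → ∀ a : ZMod g,
    (Finset.univ.filter (fun j => M k j - M l j = a)).card = lam

/-- If `g > 2`, `λ ≥ 1` and `M` is a GH(g,λ) over `ℤ_g`, then the matrix
`H` with entries `h_{i,j} = ζ^{m_{i,j}}`, where `ζ = exp(2π√(-1)/g)`, is an
S-Hadamard matrix of order `gλ`. -/
theorem gh_gives_sHadamard (g lam : ℕ) (hg : 2 < g) (hlam : 1 ≤ lam)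
    (M : Matrix (Fin (g * lam)) (Fin (g * lam)) (ZMod g)) (hM : IsGH g lam M) :
    IsSHadamard (Matrix.of fun i j =>
      Complex.exp (2 * Real.pi * Complex.I / g) ^ (M i j).val) := by
  have hg0 : g ≠ 0 := by omega
  haveI : NeZero g := ⟨hg0⟩
  set ζ : ℂ := Complex.exp (2 * Real.pi * Complex.I / g) with hζdef
  have hprim : IsPrimitiveRoot ζ g := Complex.isPrimitiveRoot_exp g hg0
  have hζg : ζ ^ g = 1 := hprim.pow_eq_one
  have hζ1 : ζ ≠ 1 := by
    simpa using hprim.pow_ne_one_of_pos_of_lt one_ne_zero (by omega)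
  have hζ2 : ζ ^ 2 ≠ 1 := hprim.pow_ne_one_of_pos_of_lt two_ne_zero hg
  -- reduce powers mod g
  have hpowmod : ∀ (x : ℂ), x ^ g = 1 → ∀ m : ℕ, x ^ m = x ^ (m % g) := by
    intro x hx m
    conv_lhs => rw [← Nat.div_add_mod m g]
    rw [pow_add, pow_mul, hx, one_pow, one_mul]
  have hadd : ∀ (x : ℂ), x ^ g = 1 → ∀ a b : ZMod g,
      x ^ (a + b).val = x ^ a.val * x ^ b.val := by
    intro x hx a b
    rw [ZMod.val_add, ← hpowmod x hx, pow_add]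
  have habs : ‖ζ‖ = 1 := by
    have h1 : ‖ζ‖ ^ g = 1 := by rw [← norm_pow, hζg, norm_one]
    have h2 := norm_nonneg ζ
    rcases pow_eq_one_iff_cases.mp h1 with h | h | h
    · omega
    · exact h
    · nlinarith [h.1]
  have hne : ∀ m : ℕ, ζ ^ m ≠ 0 := fun m => pow_ne_zero m (by
    intro h; rw [h, norm_zero] at habs; norm_num at habs)
  -- conjugation
  have hconj : ∀ b : ZMod g, (starRingEnd ℂ) (ζ ^ b.val) = ζ ^ (-b).val := by
    intro b
    have h1 : ζ ^ b.val * (starRingEnd ℂ) (ζ ^ b.val) = 1 := by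
      rw [Complex.mul_conj, Complex.normSq_eq_norm_sq, norm_pow, habs, one_pow]
      norm_num
    have h2 : ζ ^ b.val * ζ ^ (-b).val = 1 := by
      rw [← hadd ζ hζg, add_neg_cancel, ZMod.val_zero, pow_zero]
    exact mul_left_cancel₀ (hne _) (h1.trans h2.symm)
  -- the key sum over ZMod g
  have hsum : ∀ x : ℂ, x ^ g = 1 → x ≠ 1 → ∑ a : ZMod g, x ^ a.val = 0 := by
    intro x hx hx1
    have key : (x - 1) * ∑ a : ZMod g, x ^ a.val = 0 := by
      rw [Finset.mul_sum]
      have h3 : ∀ a : ZMod g, (x - 1) * x ^ a.val = x ^ (a + 1).val - x ^ a.val := by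
        intro a
        rw [hadd x hx a 1, sub_mul, one_mul]
        congr 1
        rw [ZMod.val_one_eq_one_mod, ← hpowmod x hx, pow_one, mul_comm]
      rw [Finset.sum_congr rfl fun a _ => h3 a, Finset.sum_sub_distrib]
      have h4 : ∑ a : ZMod g, x ^ (a + 1).val = ∑ a : ZMod g, x ^ a.val :=
        Fintype.sum_equiv (Equiv.addRight (1 : ZMod g)) _ _ fun a => rfl
      rw [h4, sub_self]
    rcases mul_eq_zero.mp key with h | h
    · exact absurd (sub_eq_zero.mp h) hx1
    · exact h
  -- fiberwise sums
  have hfib : ∀ k l, k ≠ l → ∀ F : ZMod g → ℂ,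
      ∑ j, F (M k j - M l j) = (lam : ℂ) * ∑ a : ZMod g, F a := by
    intro k l hkl F
    rw [← Finset.sum_fiberwise' Finset.univ (fun j => M k j - M l j) F, Finset.mul_sum]
    refine Finset.sum_congr rfl fun a _ => ?_
    rw [Finset.sum_const, hM k l hkl a, nsmul_eq_mul]
  refine ⟨?_, ?_, ?_⟩
  · ext k l
    rw [Matrix.mul_apply]
    simp only [Matrix.smul_apply, Matrix.one_apply, smul_eq_mul]
    by_cases hkl : k = l
    · subst hkl
      simp only [if_pos rfl, smul_eq_mul, mul_one]
      have : ∀ j, (Matrix.of fun i j => ζ ^ (M i j).val) k j *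
          (Matrix.of fun i j => ζ ^ (M i j).val).conjTranspose j k = 1 := by
        intro j
        rw [Matrix.conjTranspose_apply]
        simp only [Matrix.of_apply]
        rw [← starRingEnd_apply, hconj,
          ← hadd ζ hζg, add_neg_cancel, ZMod.val_zero, pow_zero]
      rw [Finset.sum_congr rfl fun j _ => this j, Finset.sum_const, Finset.card_univ,
        Fintype.card_fin, nsmul_eq_mul, mul_one]
      simp
    · simp only [if_neg hkl, smul_eq_mul, mul_zero]
      have h5 : ∀ j, (Matrix.of fun i j => ζ ^ (M i j).val) k j *
          (Matrix.of fun i j => ζ ^ (M i j).val).conjTranspose j l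
          = ζ ^ (M k j - M l j).val := by
        intro j
        rw [Matrix.conjTranspose_apply]
        simp only [Matrix.of_apply]
        rw [← starRingEnd_apply, hconj, ← hadd ζ hζg, sub_eq_add_neg]
      rw [Finset.sum_congr rfl fun j _ => h5 j,
        hfib k l hkl (fun a => ζ ^ a.val), hsum ζ hζg hζ1, mul_zero]
  · intro i j
    rw [Matrix.of_apply, norm_pow, habs, one_pow]
  · intro k l hkl
    have h6 : ∀ j, ((Matrix.of fun i j => ζ ^ (M i j).val) k j) ^ 2 *
        (starRingEnd ℂ) (((Matrix.of fun i j => ζ ^ (M i j).val) l j) ^ 2)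
        = (ζ ^ 2) ^ (M k j - M l j).val := by
      intro j
      rw [Matrix.of_apply, Matrix.of_apply]
      have e1 : ∀ a : ZMod g, (ζ ^ a.val) ^ 2 = ζ ^ (a + a).val := by
        intro a; rw [hadd ζ hζg, sq]
      rw [e1, e1, hconj, ← hadd ζ hζg]
      have e2 : M k j + M k j + (-(M l j + M l j)) = (M k j - M l j) + (M k j - M l j) := by
        ring
      rw [e2, hadd ζ hζg, ← sq, ← pow_mul, pow_mul']
    rw [Finset.sum_congr rfl fun j _ => h6 j,
      hfib k l hkl (fun a => (ζ ^ 2) ^ a.val),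
      hsum (ζ ^ 2) (by rw [← pow_mul, mul_comm, pow_mul, hζg, one_pow]) hζ2, mul_zero]
end

section
/- Let H be an S-Hadamard matrix of order n whose first row h_1 is the all-one vector, and denote by h_r the r-th row of H. For 1 ≤ r ≠ s ≤ n+1 define vectors v^{r,s} = v^{s,r} ∈ ℂ^n by: v^{1,s} = h_{s-1} for 1 < s ≤ n+1; v^{2,s} = h_{s-1} ∘ h_{s-1} for 2 < s ≤ n+1; and v^{r,s} = h_{r-1} ∘ h_{s-1} for 2 < r < s ≤ n+1. Then for every r ∈ {1,…,n+1} and all distinct s, t ∈ {1,…,n+1} with s ≠ r and t ≠ r, the vectors v^{r,s} and v^{r,t} are orthogonal: ⟨v^{r,s}, v^{r,t}⟩ = 0. -/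
open scoped Classical

/-- The standard inner product on `ℂ^n`: `⟨x,y⟩ = ∑ i, x i * conj (y i)`. -/
noncomputable def sinner {n : ℕ} (x y : Fin n → ℂ) : ℂ :=
  ∑ i, x i * (starRingEnd ℂ) (y i)

/-- The row of `H` with 1-based label `m`, i.e. `ksRow H m = h_m` for
`1 ≤ m ≤ n` (junk value outside this range). -/
noncomputable def ksRow {n : ℕ} (H : Matrix (Fin n) (Fin n) ℂ) (m : ℕ) :
    Fin n → ℂ :=
  fun j => if h : m - 1 < n then H ⟨m - 1, h⟩ j else 0

/-- The vector `v^{r,s}` (1-based labels `1 ≤ r ≠ s ≤ n+1`), built from the rows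
of `H`: `v^{1,s} = h_{s-1}`, `v^{2,s} = h_{s-1} ∘ h_{s-1}` for `s > 2`, and
`v^{r,s} = h_{r-1} ∘ h_{s-1}` for `2 < r < s`, extended symmetrically
(`v^{s,r} = v^{r,s}`), where `∘` is the entrywise product. -/
noncomputable def ksVec {n : ℕ} (H : Matrix (Fin n) (Fin n) ℂ) (r s : ℕ) :
    Fin n → ℂ :=
  if min r s = 1 then ksRow H (max r s - 1)
  else if min r s = 2 then fun j => ksRow H (max r s - 1) j * ksRow H (max r s - 1) j
  else fun j => ksRow H (min r s - 1) j * ksRow H (max r s - 1) j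

lemma ksVec_comm {n : ℕ} (H : Matrix (Fin n) (Fin n) ℂ) (r s : ℕ) :
    ksVec H r s = ksVec H s r := by
  rw [ksVec, ksVec, min_comm, max_comm]

lemma ksVec_one {n : ℕ} (H : Matrix (Fin n) (Fin n) ℂ) {s : ℕ} (h2 : 2 ≤ s)
    (hs : s - 1 - 1 < n) : ksVec H 1 s = fun j => H ⟨s - 1 - 1, hs⟩ j := by
  have h1 : min 1 s = 1 := by omega
  have h2' : max 1 s = s := by omega
  rw [ksVec, if_pos h1, h2']
  funext j
  rw [ksRow, dif_pos hs]

lemma ksVec_two {n : ℕ} (H : Matrix (Fin n) (Fin n) ℂ) {s : ℕ} (h3 : 3 ≤ s)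
    (hs : s - 1 - 1 < n) :
    ksVec H 2 s = fun j => H ⟨s - 1 - 1, hs⟩ j * H ⟨s - 1 - 1, hs⟩ j := by
  have h1 : min 2 s = 2 := by omega
  have h2' : max 2 s = s := by omega
  rw [ksVec, if_neg (by omega), if_pos h1, h2']
  funext j
  rw [ksRow, dif_pos hs]

lemma ksVec_gen {n : ℕ} (H : Matrix (Fin n) (Fin n) ℂ) {r s : ℕ} (h3 : 3 ≤ r)
    (h3' : 3 ≤ s) (hne : r ≠ s) (hr : r - 1 - 1 < n) (hs : s - 1 - 1 < n) :
    ksVec H r s = fun j => H ⟨r - 1 - 1, hr⟩ j * H ⟨s - 1 - 1, hs⟩ j := by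
  rcases lt_or_gt_of_ne hne with h | h
  · have h1 : min r s = r := by omega
    have h2' : max r s = s := by omega
    rw [ksVec, if_neg (by omega), if_neg (by omega), h1, h2']
    funext j
    rw [ksRow, ksRow, dif_pos hr, dif_pos hs]
  · have h1 : min r s = s := by omega
    have h2' : max r s = r := by omega
    rw [ksVec, if_neg (by omega), if_neg (by omega), h1, h2']
    funext j
    rw [ksRow, ksRow, dif_pos hs, dif_pos hr, mul_comm]


set_option maxHeartbeats 1000000 in
/-- If `H` is an S-Hadamard matrix of order `n` whose first row is the all-one
vector, then for every `r ∈ {1,…,n+1}` and all distinct `s, t ∈ {1,…,n+1}`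
different from `r`, the vectors `v^{r,s}` and `v^{r,t}` are orthogonal. -/
theorem ksVec_orthogonal {n : ℕ} (H : Matrix (Fin n) (Fin n) ℂ)
    (hH : IsSHadamard H) (hrow : ∀ j, ksRow H 1 j = 1)
    (r s t : ℕ) (hr1 : 1 ≤ r) (hr2 : r ≤ n + 1) (hs1 : 1 ≤ s) (hs2 : s ≤ n + 1)
    (ht1 : 1 ≤ t) (ht2 : t ≤ n + 1) (hst : s ≠ t) (hsr : s ≠ r) (htr : t ≠ r) :
    sinner (ksVec H r s) (ksVec H r t) = 0 := by
  obtain ⟨hU, habs, hsq⟩ := hH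
  have hn : 2 ≤ n := by omega
  have h0 : ∀ (k : ℕ) (hk : k < n), k = 0 → ∀ j, H ⟨k, hk⟩ j = 1 := by
    rintro k hk rfl j
    have h := hrow j
    rw [ksRow, dif_pos (show (1:ℕ) - 1 < n by omega)] at h
    exact h
  have unim : ∀ (a : Fin n) j, H a j * (starRingEnd ℂ) (H a j) = 1 := by
    intro a j
    show H a j * (starRingEnd ℂ) (H a j) = 1
    rw [Complex.mul_conj, Complex.normSq_eq_norm_sq, habs a j]
    norm_num
  have key : ∀ (k l : ℕ) (hk : k < n) (hl : l < n), k ≠ l →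
      ∑ j, H ⟨k, hk⟩ j * (starRingEnd ℂ) (H ⟨l, hl⟩ j) = 0 := by
    intro k l hk hl hkl
    have h := congrFun (congrFun hU ⟨k, hk⟩) ⟨l, hl⟩
    rw [Matrix.mul_apply] at h
    simp only [Matrix.conjTranspose_apply, Matrix.smul_apply, Matrix.one_apply,
      if_neg (show (⟨k, hk⟩ : Fin n) ≠ ⟨l, hl⟩ from Fin.ne_of_val_ne hkl),
      smul_zero] at h
    simp only [starRingEnd_apply]
    exact h
  have key2 : ∀ (k l : ℕ) (hk : k < n) (hl : l < n), k ≠ l →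
      ∑ j, (H ⟨k, hk⟩ j * H ⟨k, hk⟩ j) * (starRingEnd ℂ) (H ⟨l, hl⟩ j * H ⟨l, hl⟩ j) = 0 := by
    intro k l hk hl hkl
    have h := hsq ⟨k, hk⟩ ⟨l, hl⟩ (Fin.ne_of_val_ne hkl)
    simpa [pow_two, map_mul] using h
  have hrsum : ∀ (k : ℕ) (hk : k < n), k ≠ 0 → ∑ j, H ⟨k, hk⟩ j = 0 := by
    intro k hk hk0
    have h := key k 0 hk (by omega) hk0
    simp only [h0 0 (by omega) rfl, map_one, mul_one] at h
    exact h
  have hcsum : ∀ (k : ℕ) (hk : k < n), k ≠ 0 → ∑ j, (starRingEnd ℂ) (H ⟨k, hk⟩ j) = 0 := by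
    intro k hk hk0
    rw [← map_sum, hrsum k hk hk0, map_zero]
  have hssum : ∀ (k : ℕ) (hk : k < n), k ≠ 0 →
      ∑ j, H ⟨k, hk⟩ j * H ⟨k, hk⟩ j = 0 := by
    intro k hk hk0
    have h := key2 k 0 hk (by omega) hk0
    simp only [h0 0 (by omega) rfl, map_one, one_mul, mul_one] at h
    exact h
  have hcssum : ∀ (k : ℕ) (hk : k < n), k ≠ 0 →
      ∑ j, (starRingEnd ℂ) (H ⟨k, hk⟩ j * H ⟨k, hk⟩ j) = 0 := by
    intro k hk hk0
    rw [← map_sum, hssum k hk hk0, map_zero]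
  by_cases hr_1 : r = 1
  · subst hr_1
    rw [ksVec_one H (show 2 ≤ s by omega) (show s - 1 - 1 < n by omega),
      ksVec_one H (show 2 ≤ t by omega) (show t - 1 - 1 < n by omega), sinner]
    exact key _ _ _ _ (by omega)
  by_cases hr_2 : r = 2
  · subst hr_2
    by_cases hs_1 : s = 1
    · subst hs_1
      rw [ksVec_comm H 2 1, ksVec_one H (show 2 ≤ 2 by omega) (show 2 - 1 - 1 < n by omega),
        ksVec_two H (show 3 ≤ t by omega) (show t - 1 - 1 < n by omega), sinner]
      calc (∑ j, H ⟨2-1-1, by omega⟩ j * (starRingEnd ℂ) (H ⟨t-1-1, by omega⟩ j * H ⟨t-1-1, by omega⟩ j))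
          = ∑ j, (starRingEnd ℂ) (H ⟨t-1-1, by omega⟩ j * H ⟨t-1-1, by omega⟩ j) := by
            refine Finset.sum_congr rfl fun j _ => ?_
            rw [h0 (2-1-1) (by omega) (by omega) j, one_mul]
        _ = 0 := hcssum (t-1-1) (by omega) (by omega)
    by_cases ht_1 : t = 1
    · subst ht_1
      rw [ksVec_comm H 2 1, ksVec_one H (show 2 ≤ 2 by omega) (show 2 - 1 - 1 < n by omega),
        ksVec_two H (show 3 ≤ s by omega) (show s - 1 - 1 < n by omega), sinner]
      calc (∑ j, (H ⟨s-1-1, by omega⟩ j * H ⟨s-1-1, by omega⟩ j) * (starRingEnd ℂ) (H ⟨2-1-1, by omega⟩ j))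
          = ∑ j, H ⟨s-1-1, by omega⟩ j * H ⟨s-1-1, by omega⟩ j := by
            refine Finset.sum_congr rfl fun j _ => ?_
            rw [h0 (2-1-1) (by omega) (by omega) j, map_one, mul_one]
        _ = 0 := hssum (s-1-1) (by omega) (by omega)
    · rw [ksVec_two H (show 3 ≤ s by omega) (show s - 1 - 1 < n by omega),
        ksVec_two H (show 3 ≤ t by omega) (show t - 1 - 1 < n by omega), sinner]
      exact key2 _ _ _ _ (by omega)
  · -- r ≥ 3
    have hr3 : 3 ≤ r := by omega
    have hra : r - 1 - 1 < n := by omega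
    have hvr1 : ksVec H r 1 = fun j => H ⟨r-1-1, hra⟩ j := by
      rw [ksVec_comm, ksVec_one H (show 2 ≤ r by omega) hra]
    have hvr2 : ksVec H r 2 = fun j => H ⟨r-1-1, hra⟩ j * H ⟨r-1-1, hra⟩ j := by
      rw [ksVec_comm, ksVec_two H hr3 hra]
    by_cases hs_1 : s = 1
    · subst hs_1
      by_cases ht_2 : t = 2
      · subst ht_2
        rw [hvr1, hvr2, sinner]
        calc (∑ j, H ⟨r-1-1, hra⟩ j * (starRingEnd ℂ) (H ⟨r-1-1, hra⟩ j * H ⟨r-1-1, hra⟩ j))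
            = ∑ j, (starRingEnd ℂ) (H ⟨r-1-1, hra⟩ j) := by
              refine Finset.sum_congr rfl fun j _ => ?_
              rw [map_mul, show H ⟨r-1-1, hra⟩ j * ((starRingEnd ℂ) (H ⟨r-1-1, hra⟩ j) * (starRingEnd ℂ) (H ⟨r-1-1, hra⟩ j)) =
                (H ⟨r-1-1, hra⟩ j * (starRingEnd ℂ) (H ⟨r-1-1, hra⟩ j)) * (starRingEnd ℂ) (H ⟨r-1-1, hra⟩ j) by ring,
                unim _ j, one_mul]
          _ = 0 := hcsum _ _ (by omega)
      · have ht3 : 3 ≤ t := by omega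
        have htb : t - 1 - 1 < n := by omega
        rw [hvr1, ksVec_gen H hr3 ht3 (by omega) hra htb, sinner]
        calc (∑ j, H ⟨r-1-1, hra⟩ j * (starRingEnd ℂ) (H ⟨r-1-1, hra⟩ j * H ⟨t-1-1, htb⟩ j))
            = ∑ j, (starRingEnd ℂ) (H ⟨t-1-1, htb⟩ j) := by
              refine Finset.sum_congr rfl fun j _ => ?_
              rw [map_mul, show H ⟨r-1-1, hra⟩ j * ((starRingEnd ℂ) (H ⟨r-1-1, hra⟩ j) * (starRingEnd ℂ) (H ⟨t-1-1, htb⟩ j)) =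
                (H ⟨r-1-1, hra⟩ j * (starRingEnd ℂ) (H ⟨r-1-1, hra⟩ j)) * (starRingEnd ℂ) (H ⟨t-1-1, htb⟩ j) by ring,
                unim _ j, one_mul]
          _ = 0 := hcsum _ _ (by omega)
    by_cases hs_2 : s = 2
    · subst hs_2
      by_cases ht_1 : t = 1
      · subst ht_1
        rw [hvr1, hvr2, sinner]
        calc (∑ j, (H ⟨r-1-1, hra⟩ j * H ⟨r-1-1, hra⟩ j) * (starRingEnd ℂ) (H ⟨r-1-1, hra⟩ j))
            = ∑ j, H ⟨r-1-1, hra⟩ j := by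
              refine Finset.sum_congr rfl fun j _ => ?_
              rw [show (H ⟨r-1-1, hra⟩ j * H ⟨r-1-1, hra⟩ j) * (starRingEnd ℂ) (H ⟨r-1-1, hra⟩ j) =
                H ⟨r-1-1, hra⟩ j * (H ⟨r-1-1, hra⟩ j * (starRingEnd ℂ) (H ⟨r-1-1, hra⟩ j)) by ring,
                unim _ j, mul_one]
          _ = 0 := hrsum _ _ (by omega)
      · have ht3 : 3 ≤ t := by omega
        have htb : t - 1 - 1 < n := by omega
        rw [hvr2, ksVec_gen H hr3 ht3 (by omega) hra htb, sinner]
        calc (∑ j, (H ⟨r-1-1, hra⟩ j * H ⟨r-1-1, hra⟩ j) * (starRingEnd ℂ) (H ⟨r-1-1, hra⟩ j * H ⟨t-1-1, htb⟩ j))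
            = ∑ j, H ⟨r-1-1, hra⟩ j * (starRingEnd ℂ) (H ⟨t-1-1, htb⟩ j) := by
              refine Finset.sum_congr rfl fun j _ => ?_
              rw [map_mul, show (H ⟨r-1-1, hra⟩ j * H ⟨r-1-1, hra⟩ j) *
                  ((starRingEnd ℂ) (H ⟨r-1-1, hra⟩ j) * (starRingEnd ℂ) (H ⟨t-1-1, htb⟩ j)) =
                (H ⟨r-1-1, hra⟩ j * (starRingEnd ℂ) (H ⟨r-1-1, hra⟩ j)) *
                  (H ⟨r-1-1, hra⟩ j * (starRingEnd ℂ) (H ⟨t-1-1, htb⟩ j)) by ring,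
                unim _ j, one_mul]
          _ = 0 := key _ _ _ _ (by omega)
    · have hs3 : 3 ≤ s := by omega
      have hsb : s - 1 - 1 < n := by omega
      have hvrs : ksVec H r s = fun j => H ⟨r-1-1, hra⟩ j * H ⟨s-1-1, hsb⟩ j :=
        ksVec_gen H hr3 hs3 (by omega) hra hsb
      by_cases ht_1 : t = 1
      · subst ht_1
        rw [hvr1, hvrs, sinner]
        calc (∑ j, (H ⟨r-1-1, hra⟩ j * H ⟨s-1-1, hsb⟩ j) * (starRingEnd ℂ) (H ⟨r-1-1, hra⟩ j))
            = ∑ j, H ⟨s-1-1, hsb⟩ j := by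
              refine Finset.sum_congr rfl fun j _ => ?_
              rw [show (H ⟨r-1-1, hra⟩ j * H ⟨s-1-1, hsb⟩ j) * (starRingEnd ℂ) (H ⟨r-1-1, hra⟩ j) =
                (H ⟨r-1-1, hra⟩ j * (starRingEnd ℂ) (H ⟨r-1-1, hra⟩ j)) * H ⟨s-1-1, hsb⟩ j by ring,
                unim _ j, one_mul]
          _ = 0 := hrsum _ _ (by omega)
      by_cases ht_2 : t = 2
      · subst ht_2
        rw [hvr2, hvrs, sinner]
        calc (∑ j, (H ⟨r-1-1, hra⟩ j * H ⟨s-1-1, hsb⟩ j) * (starRingEnd ℂ) (H ⟨r-1-1, hra⟩ j * H ⟨r-1-1, hra⟩ j))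
            = ∑ j, H ⟨s-1-1, hsb⟩ j * (starRingEnd ℂ) (H ⟨r-1-1, hra⟩ j) := by
              refine Finset.sum_congr rfl fun j _ => ?_
              rw [map_mul, show (H ⟨r-1-1, hra⟩ j * H ⟨s-1-1, hsb⟩ j) *
                  ((starRingEnd ℂ) (H ⟨r-1-1, hra⟩ j) * (starRingEnd ℂ) (H ⟨r-1-1, hra⟩ j)) =
                (H ⟨r-1-1, hra⟩ j * (starRingEnd ℂ) (H ⟨r-1-1, hra⟩ j)) *
                  (H ⟨s-1-1, hsb⟩ j * (starRingEnd ℂ) (H ⟨r-1-1, hra⟩ j)) by ring,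
                unim _ j, one_mul]
          _ = 0 := key _ _ _ _ (by omega)
      · have ht3 : 3 ≤ t := by omega
        have htb : t - 1 - 1 < n := by omega
        rw [hvrs, ksVec_gen H hr3 ht3 (by omega) hra htb, sinner]
        calc (∑ j, (H ⟨r-1-1, hra⟩ j * H ⟨s-1-1, hsb⟩ j) * (starRingEnd ℂ) (H ⟨r-1-1, hra⟩ j * H ⟨t-1-1, htb⟩ j))
            = ∑ j, H ⟨s-1-1, hsb⟩ j * (starRingEnd ℂ) (H ⟨t-1-1, htb⟩ j) := by
              refine Finset.sum_congr rfl fun j _ => ?_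
              rw [map_mul, show (H ⟨r-1-1, hra⟩ j * H ⟨s-1-1, hsb⟩ j) *
                  ((starRingEnd ℂ) (H ⟨r-1-1, hra⟩ j) * (starRingEnd ℂ) (H ⟨t-1-1, htb⟩ j)) =
                (H ⟨r-1-1, hra⟩ j * (starRingEnd ℂ) (H ⟨r-1-1, hra⟩ j)) *
                  (H ⟨s-1-1, hsb⟩ j * (starRingEnd ℂ) (H ⟨t-1-1, htb⟩ j)) by ring,
                unim _ j, one_mul]
          _ = 0 := key _ _ _ _ (by omega)
end

section
/- Let H be an S-Hadamard matrix of order n whose first row is the all-one vector, and define the vectors v^{r,s} (1 ≤ r ≠ s ≤ n+1) from the rows of H as follows: v^{1,s} = h_{s-1} for 1 < s ≤ n+1; v^{2,s} = h_{s-1} ∘ h_{s-1} for 2 < s ≤ n+1; v^{r,s} = h_{r-1} ∘ h_{s-1} for 2 < r < s ≤ n+1; and v^{s,r} = v^{r,s}. Then for all pairwise distinct i, j, k ∈ {1,…,n+1}, we have v^{i,j} ≠ v^{i,k}. -/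
open scoped Classical

set_option maxHeartbeats 1000000 in
/-- If `H` is an S-Hadamard matrix of order `n` whose first row is the all-one
vector, then for pairwise distinct `i, j, k ∈ {1,…,n+1}` we have
`v^{i,j} ≠ v^{i,k}`. -/
theorem ksVec_ne_of_distinct {n : ℕ} (H : Matrix (Fin n) (Fin n) ℂ)
    (hH : IsSHadamard H) (hrow : ∀ j, ksRow H 1 j = 1)
    (i j k : ℕ) (hi1 : 1 ≤ i) (hi2 : i ≤ n + 1) (hj1 : 1 ≤ j) (hj2 : j ≤ n + 1)
    (hk1 : 1 ≤ k) (hk2 : k ≤ n + 1)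
    (hij : i ≠ j) (hik : i ≠ k) (hjk : j ≠ k) :
    ksVec H i j ≠ ksVec H i k := by
  intro hEq
  obtain ⟨h1, h2, h3⟩ := hH
  have hn : 2 ≤ n := by omega
  have h0n : 0 < n := by omega
  -- basic facts at the level of matrix entries
  have hunit : ∀ (a : Fin n) (t : Fin n), H a t * (starRingEnd ℂ) (H a t) = 1 := by
    intro a t
    rw [Complex.mul_conj, Complex.normSq_eq_norm_sq, h2 a t]
    norm_num
  have hv2 : ∀ (a b : Fin n) (t : Fin n),
      (H a t * H b t) * (starRingEnd ℂ) (H a t * H b t) = 1 := by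
    intro a b t
    rw [map_mul]
    linear_combination (H b t * (starRingEnd ℂ) (H b t)) * hunit a t + hunit b t
  have hzero : ∀ t, H ⟨0, h0n⟩ t = 1 := by
    intro t
    have h := hrow t
    unfold ksRow at h
    rw [dif_pos h0n] at h
    exact h
  have horth : ∀ a b : Fin n, a ≠ b →
      ∑ t, H a t * (starRingEnd ℂ) (H b t) = 0 := by
    intro a b hab
    have e := congrFun (congrFun h1 a) b
    rw [Matrix.mul_apply] at e
    simp only [Matrix.conjTranspose_apply, Matrix.smul_apply, Matrix.one_apply,
      if_neg hab, smul_zero] at e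
    exact e
  have hrowsum : ∀ a : Fin n, (a : ℕ) ≠ 0 → ∑ t, H a t = 0 := by
    intro a ha
    have := horth a ⟨0, h0n⟩ (Fin.ne_of_val_ne ha)
    simpa [hzero] using this
  have hconjrowsum : ∀ a : Fin n, (a : ℕ) ≠ 0 →
      ∑ t, (starRingEnd ℂ) (H a t) = 0 := by
    intro a ha
    have := horth ⟨0, h0n⟩ a (Fin.ne_of_val_ne (Ne.symm ha))
    simpa [hzero] using this
  have hsqsum : ∀ a : Fin n, (a : ℕ) ≠ 0 → ∑ t, H a t * H a t = 0 := by
    intro a ha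
    have := h3 a ⟨0, h0n⟩ (Fin.ne_of_val_ne ha)
    simpa [hzero, pow_two] using this
  have hconjsqsum : ∀ a : Fin n, (a : ℕ) ≠ 0 →
      ∑ t, (starRingEnd ℂ) (H a t * H a t) = 0 := by
    intro a ha
    have := h3 ⟨0, h0n⟩ a (Fin.ne_of_val_ne (Ne.symm ha))
    simpa [hzero, pow_two, map_mul] using this
  have hsqorth : ∀ a b : Fin n, a ≠ b →
      ∑ t, (H a t * H a t) * (starRingEnd ℂ) (H b t * H b t) = 0 := by
    intro a b hab
    simpa [pow_two, map_mul] using h3 a b hab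
  -- the contradiction engine
  have fin0 : ∀ v w : Fin n → ℂ,
      (∀ t, v t * (starRingEnd ℂ) (v t) = 1) →
      (∑ t, v t * (starRingEnd ℂ) (w t) = 0) → v = w → False := by
    intro v w hv h0 he
    rw [← he] at h0
    simp only [hv, Finset.sum_const, Finset.card_univ, Fintype.card_fin,
      nsmul_eq_mul, mul_one] at h0
    have : n = 0 := by exact_mod_cast h0
    omega
  -- unfolding lemmas for ksVec / ksRow
  have kvA : ∀ r s : ℕ, min r s = 1 → ksVec H r s = ksRow H (max r s - 1) := by
    intro r s h
    unfold ksVec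
    rw [if_pos h]
  have kvB : ∀ r s : ℕ, min r s = 2 →
      ksVec H r s = fun t => ksRow H (max r s - 1) t * ksRow H (max r s - 1) t := by
    intro r s h
    unfold ksVec
    rw [if_neg (by omega), if_pos h]
  have kvC : ∀ r s : ℕ, 3 ≤ r → 3 ≤ s →
      ksVec H r s = fun t => ksRow H (r - 1) t * ksRow H (s - 1) t := by
    intro r s hr hs
    unfold ksVec
    rw [if_neg (by omega), if_neg (by omega)]
    rcases le_total r s with h | h
    · rw [min_eq_left h, max_eq_right h]
    · rw [min_eq_right h, max_eq_left h]
      funext t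
      exact mul_comm _ _
  have kr : ∀ (m : ℕ) (a : Fin n), 2 ≤ m → (a : ℕ) = m - 2 →
      ksRow H (m - 1) = fun t => H a t := by
    intro m a hm hva
    funext t
    have hlt := a.isLt
    have e : m - 1 - 1 = (a : ℕ) := by omega
    have h : m - 1 - 1 < n := by omega
    simp only [ksRow, dif_pos h]
    congr 1
    exact Fin.ext e
  have krow1 : ksRow H 1 = fun _ => (1 : ℂ) := funext hrow
  -- case analysis
  rcases (by omega : i = 1 ∨ i = 2 ∨ 3 ≤ i) with hi | hi | hi
  · -- i = 1
    subst hi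
    obtain ⟨c, hc⟩ : ∃ c : Fin n, (c : ℕ) = j - 2 := ⟨⟨j - 2, by omega⟩, rfl⟩
    obtain ⟨b, hb⟩ : ∃ b : Fin n, (b : ℕ) = k - 2 := ⟨⟨k - 2, by omega⟩, rfl⟩
    rw [kvA 1 j (by omega), kvA 1 k (by omega),
      show max 1 j = j from by omega, show max 1 k = k from by omega,
      kr j c (by omega) hc, kr k b (by omega) hb] at hEq
    exact fin0 _ _ (fun t => hunit _ t)
      (horth _ _ (Fin.ne_of_val_ne (by omega))) hEq
  · -- i = 2
    subst hi
    rcases (by omega : j = 1 ∨ 3 ≤ j) with hj | hj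
    · -- j = 1, k ≥ 3 : v1 = all ones, v2 = square of row k-2
      subst hj
      obtain ⟨b, hb⟩ : ∃ b : Fin n, (b : ℕ) = k - 2 := ⟨⟨k - 2, by omega⟩, rfl⟩
      rw [kvA 2 1 (by omega), show max 2 1 - 1 = 1 from by omega, krow1,
        kvB 2 k (by omega), show max 2 k = k from by omega,
        kr k b (by omega) hb] at hEq
      refine fin0 _ _ (fun t => by simp) ?_ hEq
      simpa using hconjsqsum b (by omega)
    · rcases (by omega : k = 1 ∨ 3 ≤ k) with hk | hk
      · -- k = 1, j ≥ 3 : v1 = square, v2 = all ones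
        subst hk
        obtain ⟨c, hc⟩ : ∃ c : Fin n, (c : ℕ) = j - 2 := ⟨⟨j - 2, by omega⟩, rfl⟩
        rw [kvB 2 j (by omega), show max 2 j = j from by omega,
          kr j c (by omega) hc,
          kvA 2 1 (by omega), show max 2 1 - 1 = 1 from by omega, krow1] at hEq
        refine fin0 _ _ (fun t => hv2 _ _ t) ?_ hEq
        simpa using hsqsum c (by omega)
      · -- j, k ≥ 3 : squares
        obtain ⟨c, hc⟩ : ∃ c : Fin n, (c : ℕ) = j - 2 := ⟨⟨j - 2, by omega⟩, rfl⟩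
        obtain ⟨b, hb⟩ : ∃ b : Fin n, (b : ℕ) = k - 2 := ⟨⟨k - 2, by omega⟩, rfl⟩
        rw [kvB 2 j (by omega), show max 2 j = j from by omega, kr j c (by omega) hc,
          kvB 2 k (by omega), show max 2 k = k from by omega, kr k b (by omega) hb] at hEq
        exact fin0 _ _ (fun t => hv2 _ _ t)
          (hsqorth _ _ (Fin.ne_of_val_ne (by omega))) hEq
  · -- i ≥ 3
    obtain ⟨a, ha⟩ : ∃ a : Fin n, (a : ℕ) = i - 2 := ⟨⟨i - 2, by omega⟩, rfl⟩
    rcases (by omega : j = 1 ∨ j = 2 ∨ 3 ≤ j) with hj | hj | hj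
    · -- j = 1 : v1 = row a
      subst hj
      rw [kvA i 1 (by omega), show max i 1 = i from by omega,
        kr i a (by omega) ha] at hEq
      rcases (by omega : k = 2 ∨ 3 ≤ k) with hk | hk
      · -- k = 2 : v2 = square of a
        subst hk
        rw [kvB i 2 (by omega), show max i 2 = i from by omega,
          kr i a (by omega) ha] at hEq
        refine fin0 _ _ (fun t => hunit _ t) ?_ hEq
        have e : ∀ t ∈ Finset.univ, H a t * (starRingEnd ℂ) (H a t * H a t)
            = (starRingEnd ℂ) (H a t) := fun t _ => by
          rw [map_mul]; linear_combination ((starRingEnd ℂ) (H a t)) * hunit a t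
        rw [Finset.sum_congr rfl e]
        exact hconjrowsum a (by omega)
      · -- k ≥ 3 : v2 = row a ∘ row b
        obtain ⟨b, hb⟩ : ∃ b : Fin n, (b : ℕ) = k - 2 := ⟨⟨k - 2, by omega⟩, rfl⟩
        rw [kvC i k hi hk, kr i a (by omega) ha, kr k b (by omega) hb] at hEq
        refine fin0 _ _ (fun t => hunit _ t) ?_ hEq
        have e : ∀ t ∈ Finset.univ, H a t * (starRingEnd ℂ) (H a t * H b t)
            = (starRingEnd ℂ) (H b t) := fun t _ => by
          rw [map_mul]; linear_combination ((starRingEnd ℂ) (H b t)) * hunit a t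
        rw [Finset.sum_congr rfl e]
        exact hconjrowsum b (by omega)
    · -- j = 2 : v1 = square of a
      subst hj
      rw [kvB i 2 (by omega), show max i 2 = i from by omega,
        kr i a (by omega) ha] at hEq
      rcases (by omega : k = 1 ∨ 3 ≤ k) with hk | hk
      · -- k = 1 : v2 = row a
        subst hk
        rw [kvA i 1 (by omega), show max i 1 = i from by omega,
          kr i a (by omega) ha] at hEq
        refine fin0 _ _ (fun t => hv2 _ _ t) ?_ hEq
        have e : ∀ t ∈ Finset.univ, (H a t * H a t) * (starRingEnd ℂ) (H a t)
            = H a t := fun t _ => by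
          linear_combination (H a t) * hunit a t
        rw [Finset.sum_congr rfl e]
        exact hrowsum a (by omega)
      · -- k ≥ 3 : v2 = row a ∘ row b
        obtain ⟨b, hb⟩ : ∃ b : Fin n, (b : ℕ) = k - 2 := ⟨⟨k - 2, by omega⟩, rfl⟩
        rw [kvC i k hi hk, kr i a (by omega) ha, kr k b (by omega) hb] at hEq
        refine fin0 _ _ (fun t => hv2 _ _ t) ?_ hEq
        have e : ∀ t ∈ Finset.univ, (H a t * H a t) * (starRingEnd ℂ) (H a t * H b t)
            = H a t * (starRingEnd ℂ) (H b t) := fun t _ => by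
          rw [map_mul]; linear_combination (H a t * (starRingEnd ℂ) (H b t)) * hunit a t
        rw [Finset.sum_congr rfl e]
        exact horth a b (Fin.ne_of_val_ne (by omega))
    · -- j ≥ 3 : v1 = row a ∘ row c
      obtain ⟨c, hc⟩ : ∃ c : Fin n, (c : ℕ) = j - 2 := ⟨⟨j - 2, by omega⟩, rfl⟩
      rw [kvC i j hi hj, kr i a (by omega) ha, kr j c (by omega) hc] at hEq
      rcases (by omega : k = 1 ∨ k = 2 ∨ 3 ≤ k) with hk | hk | hk
      · -- k = 1 : v2 = row a
        subst hk
        rw [kvA i 1 (by omega), show max i 1 = i from by omega,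
          kr i a (by omega) ha] at hEq
        refine fin0 _ _ (fun t => hv2 _ _ t) ?_ hEq
        have e : ∀ t ∈ Finset.univ, (H a t * H c t) * (starRingEnd ℂ) (H a t)
            = H c t := fun t _ => by
          linear_combination (H c t) * hunit a t
        rw [Finset.sum_congr rfl e]
        exact hrowsum c (by omega)
      · -- k = 2 : v2 = square of a
        subst hk
        rw [kvB i 2 (by omega), show max i 2 = i from by omega,
          kr i a (by omega) ha] at hEq
        refine fin0 _ _ (fun t => hv2 _ _ t) ?_ hEq
        have e : ∀ t ∈ Finset.univ, (H a t * H c t) * (starRingEnd ℂ) (H a t * H a t)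
            = H c t * (starRingEnd ℂ) (H a t) := fun t _ => by
          rw [map_mul]; linear_combination (H c t * (starRingEnd ℂ) (H a t)) * hunit a t
        rw [Finset.sum_congr rfl e]
        exact horth c a (Fin.ne_of_val_ne (by omega))
      · -- k ≥ 3 : v2 = row a ∘ row b
        obtain ⟨b, hb⟩ : ∃ b : Fin n, (b : ℕ) = k - 2 := ⟨⟨k - 2, by omega⟩, rfl⟩
        rw [kvC i k hi hk, kr i a (by omega) ha, kr k b (by omega) hb] at hEq
        refine fin0 _ _ (fun t => hv2 _ _ t) ?_ hEq
        have e : ∀ t ∈ Finset.univ, (H a t * H c t) * (starRingEnd ℂ) (H a t * H b t)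
            = H c t * (starRingEnd ℂ) (H b t) := fun t _ => by
          rw [map_mul]; linear_combination (H c t * (starRingEnd ℂ) (H b t)) * hunit a t
        rw [Finset.sum_congr rfl e]
        exact horth c b (Fin.ne_of_val_ne (by omega))
end

section
/- Suppose n is even and there exists an S-Hadamard matrix of order n. Then there exists a Kochen-Specker pair (V, B) in ℂ^n such that |V| ≤ binom(n+1, 2) = (n+1)n/2 and the list B has length n+1. -/
open scoped Classical

/-- A finite set of vectors is an orthogonal basis of `ℂ^n` if its elements are
pairwise orthogonal (w.r.t. the standard inner product), linearly independent,
and span `ℂ^n`. -/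
def IsOrthBasis {n : ℕ} (b : Finset (Fin n → ℂ)) : Prop :=
  (∀ x ∈ b, ∀ y ∈ b, x ≠ y → sinner x y = 0) ∧
  LinearIndependent ℂ (Subtype.val : {x // x ∈ b} → (Fin n → ℂ)) ∧
  Submodule.span ℂ (b : Set (Fin n → ℂ)) = ⊤

/-- A Kochen–Specker pair `(V, B)` in `ℂ^n`, with `B = (B_1, …, B_k)`. -/
structure IsKSPair (n k : ℕ) (V : Finset (Fin n → ℂ))
    (B : Fin k → Finset (Fin n → ℂ)) : Prop where
  odd_k : Odd k
  subset_V : ∀ i, B i ⊆ V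
  basis : ∀ i, IsOrthBasis (B i)
  even_count : ∀ v ∈ V, Even ((Finset.univ.filter (fun i => v ∈ B i)).card)


/-! ### Auxiliary lemmas -/

/-- Pairwise-orthogonal vectors with nonzero self inner product are linearly independent. -/
theorem linIndep_of_orth {n : ℕ} (s : Finset (Fin n → ℂ))
    (h0 : ∀ x ∈ s, sinner x x ≠ 0)
    (horth : ∀ x ∈ s, ∀ y ∈ s, x ≠ y → sinner x y = 0) :
    LinearIndependent ℂ (Subtype.val : {x // x ∈ s} → (Fin n → ℂ)) := by
  set e := WithLp.linearEquiv 2 ℂ (Fin n → ℂ) with he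
  have key : LinearIndependent ℂ
      (fun x : {x // x ∈ s} => e.symm x.val) := by
    apply linearIndependent_of_ne_zero_of_inner_eq_zero
    · rintro ⟨x, hx⟩ hx0
      apply h0 x hx
      have hx0' : x = 0 := by
        have := congrArg e hx0
        simpa using this
      simp [hx0', sinner]
    · rintro ⟨x, hx⟩ ⟨y, hy⟩ hne
      have hxy : x ≠ y := by simpa [Subtype.ext_iff] using hne
      have h2 := horth y hy x hx hxy.symm
      rw [PiLp.inner_apply]
      rw [sinner] at h2
      simp only [RCLike.inner_apply]
      rw [← h2]
      apply Finset.sum_congr rfl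
      intro i _
      simp [he, mul_comm]
  have key2 := key.map' e.toLinearMap e.ker
  convert key2 using 1
  all_goals rfl

/-- A finset of pairwise orthogonal vectors of nonzero norm and cardinality `n`
is an orthogonal basis of `ℂ^n`. -/
theorem isOrthBasis_of_orth {n : ℕ} (s : Finset (Fin n → ℂ))
    (h0 : ∀ x ∈ s, sinner x x ≠ 0)
    (horth : ∀ x ∈ s, ∀ y ∈ s, x ≠ y → sinner x y = 0)
    (hcard : s.card = n) : IsOrthBasis s := by
  have hli := linIndep_of_orth s h0 horth
  refine ⟨horth, hli, ?_⟩
  have hspan := hli.span_eq_top_of_card_eq_finrank' (by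
    rw [Fintype.card_coe, hcard]
    simp [Module.finrank_pi])
  rwa [Subtype.range_val] at hspan

/-- The entrywise product of rows `k` and `l` of `H`. -/
noncomputable def vkl {n : ℕ} (H : Matrix (Fin n) (Fin n) ℂ) (k l : Fin n) : Fin n → ℂ :=
  fun j => H k j * H l j

theorem vkl_symm {n : ℕ} (H : Matrix (Fin n) (Fin n) ℂ) (k l : Fin n) :
    vkl H k l = vkl H l k := by
  funext j; simp [vkl, mul_comm]

theorem sinner_vkl {n : ℕ} {H : Matrix (Fin n) (Fin n) ℂ} (hH : IsSHadamard H)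
    (k l l' : Fin n) :
    sinner (vkl H k l) (vkl H k l') = if l = l' then (n : ℂ) else 0 := by
  obtain ⟨h1, h2, _⟩ := hH
  have hrow := congrFun (congrFun h1 l) l'
  rw [Matrix.mul_apply] at hrow
  simp only [Matrix.conjTranspose_apply, Matrix.smul_apply, Matrix.one_apply, RCLike.star_def,
    smul_eq_mul] at hrow
  have hunit : ∀ i j, H i j * (starRingEnd ℂ) (H i j) = 1 := by
    intro i j
    rw [Complex.mul_conj, Complex.normSq_eq_norm_sq, h2, one_pow, Complex.ofReal_one]
  calc sinner (vkl H k l) (vkl H k l')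
      = ∑ j, (H k j * (starRingEnd ℂ) (H k j)) * (H l j * (starRingEnd ℂ) (H l' j)) := by
        unfold sinner vkl
        refine Finset.sum_congr rfl fun j _ => ?_
        rw [map_mul]; ring
    _ = ∑ j, H l j * (starRingEnd ℂ) (H l' j) := by
        refine Finset.sum_congr rfl fun j _ => ?_
        rw [hunit, one_mul]
    _ = if l = l' then (n : ℂ) else 0 := by
        rw [hrow]; split <;> simp [mul_comm]

theorem sinner_vkl_diag {n : ℕ} {H : Matrix (Fin n) (Fin n) ℂ} (hH : IsSHadamard H)
    {k l : Fin n} (hkl : k ≠ l) :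
    sinner (vkl H k k) (vkl H l l) = 0 := by
  have h3 := hH.2.2 k l hkl
  rw [← h3]
  unfold sinner vkl
  refine Finset.sum_congr rfl fun j _ => ?_
  ring_nf

theorem ncast_ne_zero_of_fin {n : ℕ} (k : Fin n) : (n : ℂ) ≠ 0 := by
  have : 0 < n := k.pos
  exact_mod_cast this.ne'

theorem vkl_inj {n : ℕ} {H : Matrix (Fin n) (Fin n) ℂ} (hH : IsSHadamard H)
    (k : Fin n) : Function.Injective (vkl H k) := by
  intro l l' h
  by_contra hne
  have h0 := sinner_vkl hH k l l'
  rw [if_neg hne, h] at h0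
  have h1 := sinner_vkl hH k l' l'
  rw [if_pos rfl] at h1
  exact ncast_ne_zero_of_fin l (by rw [← h1, h0])

theorem vkl_diag_inj {n : ℕ} {H : Matrix (Fin n) (Fin n) ℂ} (hH : IsSHadamard H) :
    Function.Injective (fun k => vkl H k k) := by
  intro k k' h
  by_contra hne
  have h0 := sinner_vkl_diag hH hne
  simp only [h] at h0
  have h1 := sinner_vkl hH k' k' k'
  rw [if_pos rfl] at h1
  exact ncast_ne_zero_of_fin k (by rw [← h1, h0])

theorem zmod2_add_self : ∀ x : ZMod 2, x + x = 0 := by decide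

/-- If `n` is even and an S-Hadamard matrix of order `n` exists, then there is a
Kochen–Specker pair `(V, B)` in `ℂ^n` with `|V| ≤ C(n+1, 2)` and `|B| = n + 1`. -/
theorem ks_pair_of_sHadamard {n : ℕ} (hn : Even n)
    (hH : ∃ H : Matrix (Fin n) (Fin n) ℂ, IsSHadamard H) :
    ∃ (V : Finset (Fin n → ℂ)) (B : Fin (n + 1) → Finset (Fin n → ℂ)),
      IsKSPair n (n + 1) V B ∧ V.card ≤ (n + 1).choose 2 := by
  obtain ⟨H, hSH⟩ := hH
  set w : Sym2 (Fin n) → (Fin n → ℂ) := Sym2.lift ⟨vkl H, vkl_symm H⟩ with hw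
  set V : Finset (Fin n → ℂ) := Finset.univ.image w with hV
  set rows : Fin n → Finset (Fin n → ℂ) :=
    fun k => Finset.univ.image (vkl H k) with hrows
  set diagS : Finset (Fin n → ℂ) :=
    Finset.univ.image (fun k => vkl H k k) with hdiagS
  set B : Fin (n + 1) → Finset (Fin n → ℂ) := Fin.snoc rows diagS with hB
  have hwmk : ∀ k l : Fin n, w (s(k, l)) = vkl H k l := fun k l => rfl
  have hVmem : ∀ k l, vkl H k l ∈ V := by
    intro k l
    exact Finset.mem_image.mpr ⟨s(k, l), Finset.mem_univ _, rfl⟩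
  -- the bases
  have hrowsBasis : ∀ k, IsOrthBasis (rows k) := by
    intro k
    apply isOrthBasis_of_orth
    · rintro x hx
      obtain ⟨l, -, rfl⟩ := Finset.mem_image.mp hx
      rw [sinner_vkl hSH, if_pos rfl]
      exact ncast_ne_zero_of_fin l
    · rintro x hx y hy hne
      obtain ⟨l, -, rfl⟩ := Finset.mem_image.mp hx
      obtain ⟨l', -, rfl⟩ := Finset.mem_image.mp hy
      rw [sinner_vkl hSH, if_neg (fun h => hne (by rw [h]))]
    · rw [hrows]
      rw [Finset.card_image_of_injective _ (vkl_inj hSH k)]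
      simp
  have hdiagBasis : IsOrthBasis diagS := by
    apply isOrthBasis_of_orth
    · rintro x hx
      obtain ⟨l, -, rfl⟩ := Finset.mem_image.mp hx
      rw [sinner_vkl hSH, if_pos rfl]
      exact ncast_ne_zero_of_fin l
    · rintro x hx y hy hne
      obtain ⟨l, -, rfl⟩ := Finset.mem_image.mp hx
      obtain ⟨l', -, rfl⟩ := Finset.mem_image.mp hy
      exact sinner_vkl_diag hSH (fun h => hne (by rw [h]))
    · rw [hdiagS]
      rw [Finset.card_image_of_injective _ (vkl_diag_inj hSH)]
      simp
  refine ⟨V, B, ⟨?_, ?_, ?_, ?_⟩, ?_⟩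
  · -- odd
    obtain ⟨m, hm⟩ := hn
    exact ⟨m, by omega⟩
  · -- subset_V
    intro i
    induction i using Fin.lastCases with
    | last =>
      rw [hB]
      simp only [Fin.snoc_last]
      intro x hx
      obtain ⟨k, -, rfl⟩ := Finset.mem_image.mp hx
      exact hVmem k k
    | cast k =>
      rw [hB]
      simp only [Fin.snoc_castSucc]
      intro x hx
      obtain ⟨l, -, rfl⟩ := Finset.mem_image.mp hx
      exact hVmem k l
  · -- bases
    intro i
    induction i using Fin.lastCases with
    | last => rw [hB]; simp only [Fin.snoc_last]; exact hdiagBasis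
    | cast k => rw [hB]; simp only [Fin.snoc_castSucc]; exact hrowsBasis k
  · -- even count
    intro v₀ hv₀
    rw [Finset.card_filter]
    rw [Fin.sum_univ_castSucc]
    simp only [hB, Fin.snoc_castSucc, Fin.snoc_last]
    -- row counts
    have rowcnt : ∀ k, (if v₀ ∈ rows k then 1 else 0)
        = (Finset.univ.filter fun l => vkl H k l = v₀).card := by
      intro k
      by_cases h : v₀ ∈ rows k
      · rw [if_pos h]
        obtain ⟨l, -, hl⟩ := Finset.mem_image.mp h
        symm
        rw [Finset.card_eq_one]
        refine ⟨l, ?_⟩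
        ext l'
        simp only [Finset.mem_filter, Finset.mem_univ, true_and, Finset.mem_singleton]
        constructor
        · intro h'
          exact vkl_inj hSH k (by rw [h', hl])
        · rintro rfl; exact hl
      · rw [if_neg h]
        symm
        rw [Finset.card_eq_zero, Finset.filter_eq_empty_iff]
        intro l _
        intro hl
        exact h (Finset.mem_image.mpr ⟨l, Finset.mem_univ _, hl⟩)
    have diagcnt : (if v₀ ∈ diagS then 1 else 0)
        = (Finset.univ.filter fun k => vkl H k k = v₀).card := by
      by_cases h : v₀ ∈ diagS
      · rw [if_pos h]
        obtain ⟨l, -, hl⟩ := Finset.mem_image.mp h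
        symm
        rw [Finset.card_eq_one]
        refine ⟨l, ?_⟩
        ext l'
        simp only [Finset.mem_filter, Finset.mem_univ, true_and, Finset.mem_singleton]
        constructor
        · intro h'
          exact vkl_diag_inj hSH (show vkl H l' l' = vkl H l l by rw [h', hl])
        · rintro rfl; exact hl
      · rw [if_neg h]
        symm
        rw [Finset.card_eq_zero, Finset.filter_eq_empty_iff]
        intro l _
        intro hl
        exact h (Finset.mem_image.mpr ⟨l, Finset.mem_univ _, hl⟩)
    simp only [rowcnt, diagcnt]
    -- combine rows into a product count
    have hP : ∑ k : Fin n, (Finset.univ.filter fun l => vkl H k l = v₀).card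
        = ((Finset.univ : Finset (Fin n × Fin n)).filter
            fun p => vkl H p.1 p.2 = v₀).card := by
      rw [Finset.card_filter, Fintype.sum_prod_type]
      refine Finset.sum_congr rfl fun k _ => ?_
      rw [Finset.card_filter]
    rw [hP]
    set P := ((Finset.univ : Finset (Fin n × Fin n)).filter fun p => vkl H p.1 p.2 = v₀)
    set D := (Finset.univ.filter fun k : Fin n => vkl H k k = v₀)
    -- show divisibility by 2 via ZMod 2
    have key : ((P.card + D.card : ℕ) : ZMod 2) = 0 := by
      have hPD : ((P.card : ℕ) : ZMod 2) = ((D.card : ℕ) : ZMod 2) := by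
        have e1 : ((P.card : ℕ) : ZMod 2)
            = ∑ p : Fin n × Fin n, (if vkl H p.1 p.2 = v₀ then (1 : ZMod 2) else 0) := by
          rw [Finset.card_filter, Nat.cast_sum]
          refine Finset.sum_congr rfl fun p _ => ?_
          split <;> simp
        have e2 : ((D.card : ℕ) : ZMod 2)
            = ∑ k : Fin n, (if vkl H k k = v₀ then (1 : ZMod 2) else 0) := by
          rw [Finset.card_filter, Nat.cast_sum]
          refine Finset.sum_congr rfl fun p _ => ?_
          split <;> simp
        rw [e1, e2]
        rw [show (Finset.univ : Finset (Fin n × Fin n))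
            = (Finset.univ : Finset (Fin n)) ×ˢ Finset.univ from
          (Finset.univ_product_univ).symm]
        rw [← Finset.diag_union_offDiag, Finset.sum_union (Finset.disjoint_diag_offDiag _)]
        have ediag : ∑ p ∈ (Finset.univ : Finset (Fin n)).diag,
            (if vkl H p.1 p.2 = v₀ then (1 : ZMod 2) else 0)
            = ∑ k : Fin n, (if vkl H k k = v₀ then (1 : ZMod 2) else 0) := by
          rw [Finset.sum_diag]
        have eoff : ∑ p ∈ (Finset.univ : Finset (Fin n)).offDiag,
            (if vkl H p.1 p.2 = v₀ then (1 : ZMod 2) else 0) = 0 := by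
          apply Finset.sum_involution (g := fun p _ => (p.2, p.1))
          · intro p _
            have : vkl H p.2 p.1 = vkl H p.1 p.2 := vkl_symm H p.2 p.1
            simp only [this]
            exact zmod2_add_self _
          · intro p hp _
            have := (Finset.mem_offDiag.mp hp).2.2
            intro hc
            exact this (congrArg Prod.snd hc)
          · intro p hp
            have h' := Finset.mem_offDiag.mp hp
            exact Finset.mem_offDiag.mpr ⟨Finset.mem_univ _, Finset.mem_univ _, fun h => h'.2.2 h.symm⟩
          · intro p _
            rfl
        rw [ediag, eoff, add_zero]
      rw [Nat.cast_add, hPD]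
      exact zmod2_add_self _
    have hdvd : 2 ∣ P.card + D.card := (ZMod.natCast_eq_zero_iff _ 2).mp key
    obtain ⟨c, hc⟩ := hdvd
    exact ⟨c, by omega⟩
  · -- cardinality bound
    calc V.card ≤ (Finset.univ : Finset (Sym2 (Fin n))).card := Finset.card_image_le
      _ = Fintype.card (Sym2 (Fin n)) := Finset.card_univ
      _ = (n + 1).choose 2 := by rw [Sym2.card, Fintype.card_fin]
end

section
/- Suppose n is even and there exists an S-Hadamard matrix of order n. Then there is no function f : ℂ^n → {0,1} such that for every orthogonal basis B of ℂ^n there exists exactly one vector x ∈ B with f(x) = 1. -/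
open scoped Classical

/-- Bilinearity of `sinner` in the first argument over finite sums. -/
lemma sinner_sum_smul {n : ℕ} (s : Finset (Fin n)) (g : Fin n → ℂ)
    (v : Fin n → (Fin n → ℂ)) (y : Fin n → ℂ) :
    sinner (∑ j ∈ s, g j • v j) y = ∑ j ∈ s, g j * sinner (v j) y := by
  simp only [sinner, Finset.mul_sum, Finset.sum_apply, Pi.smul_apply, smul_eq_mul,
    Finset.sum_mul]
  rw [Finset.sum_comm]
  exact Finset.sum_congr rfl fun j _ => Finset.sum_congr rfl fun i _ => by ring

/-- A family of `n` pairwise-orthogonal vectors in `ℂ^n`, each of squared norm `n`,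
is injective and its image is an orthogonal basis. -/
lemma aux_orth_basis {n : ℕ} (v : Fin n → (Fin n → ℂ))
    (h : ∀ i j, sinner (v i) (v j) = if i = j then (n : ℂ) else 0) :
    Function.Injective v ∧ IsOrthBasis (Finset.image v Finset.univ) := by
  have hn0 : ∀ (_ : Fin n), (n : ℂ) ≠ 0 := fun i =>
    Nat.cast_ne_zero.mpr i.pos.ne'
  have hinj : Function.Injective v := by
    intro i j hij
    by_contra hne
    have h1 := h i j
    rw [if_neg hne, hij] at h1
    have h2 := h j j
    rw [if_pos rfl, h1] at h2
    exact hn0 i h2.symm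
  have hlin : LinearIndependent ℂ v := by
    rw [linearIndependent_iff']
    intro s g hsum i hi
    have hs : sinner (∑ j ∈ s, g j • v j) (v i) = 0 := by
      rw [hsum]; simp [sinner]
    rw [sinner_sum_smul] at hs
    have hs2 : ∑ j ∈ s, g j * (if j = i then (n : ℂ) else 0) = 0 := by
      calc ∑ j ∈ s, g j * (if j = i then (n : ℂ) else 0)
          = ∑ j ∈ s, g j * sinner (v j) (v i) :=
            Finset.sum_congr rfl fun j _ => by rw [h j i]
        _ = 0 := hs
    simp only [mul_ite, mul_zero] at hs2
    rw [Finset.sum_ite_eq' s i (fun j => g j * (n : ℂ))] at hs2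
    rw [if_pos hi] at hs2
    rcases mul_eq_zero.1 hs2 with h' | h'
    · exact h'
    · exact absurd h' (hn0 i)
  refine ⟨hinj, ?_, ?_, ?_⟩
  · intro x hx y hy hxy
    obtain ⟨i, -, rfl⟩ := Finset.mem_image.1 hx
    obtain ⟨j, -, rfl⟩ := Finset.mem_image.1 hy
    have hij : i ≠ j := fun hij => hxy (by rw [hij])
    rw [h i j, if_neg hij]
  · have hbij : Function.Bijective (fun i : Fin n =>
        (⟨v i, Finset.mem_image_of_mem v (Finset.mem_univ i)⟩ :
          {x // x ∈ Finset.image v Finset.univ})) := by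
      constructor
      · intro a b hab
        exact hinj (congrArg Subtype.val hab)
      · rintro ⟨x, hx⟩
        obtain ⟨i, -, rfl⟩ := Finset.mem_image.1 hx
        exact ⟨i, rfl⟩
    have heq : (Subtype.val : {x // x ∈ Finset.image v Finset.univ} → (Fin n → ℂ)) ∘
        (Equiv.ofBijective _ hbij) = v := rfl
    exact (linearIndependent_equiv' (Equiv.ofBijective _ hbij) heq).mp hlin
  · have hspan : Submodule.span ℂ (Set.range v) = ⊤ :=
      hlin.span_eq_top_of_card_eq_finrank' (by simp)
    rwa [Finset.coe_image, Finset.coe_univ, Set.image_univ]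

/-- In a basis containing exactly one `f`-valued-1 vector, the indicator sum is 1. -/
lemma aux_sum_one {V : Type*} (b : Finset V) (f : V → Fin 2)
    (h : ∃! x, x ∈ b ∧ f x = 1) :
    ∑ x ∈ b, (if f x = 1 then 1 else 0 : ℕ) = 1 := by
  obtain ⟨x₀, ⟨hxb, hxf⟩, huniq⟩ := h
  have hfil : b.filter (fun x => f x = 1) = {x₀} := by
    ext y
    simp only [Finset.mem_filter, Finset.mem_singleton]
    constructor
    · rintro ⟨hy, hfy⟩; exact huniq y ⟨hy, hfy⟩
    · rintro rfl; exact ⟨hxb, hxf⟩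
  rw [← Finset.sum_filter, hfil, Finset.sum_singleton]

/-- If `n` is even and an S-Hadamard matrix of order `n` exists, then there is
no function `f : ℂ^n → {0,1}` such that every orthogonal basis of `ℂ^n`
contains exactly one vector `x` with `f x = 1`. -/
theorem no_ks_coloring_of_sHadamard {n : ℕ} (hn : Even n)
    (hH : ∃ H : Matrix (Fin n) (Fin n) ℂ, IsSHadamard H) :
    ¬ ∃ f : (Fin n → ℂ) → Fin 2,
        ∀ b : Finset (Fin n → ℂ), IsOrthBasis b →
          ∃! x, x ∈ b ∧ f x = 1 := by
  rintro ⟨f, hf⟩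
  obtain ⟨H, hmul, habs, hsq⟩ := hH
  -- unimodularity
  have hunit : ∀ k j, H k j * (starRingEnd ℂ) (H k j) = 1 := by
    intro k j
    rw [Complex.mul_conj, Complex.normSq_eq_norm_sq, habs]
    norm_num
  -- row orthogonality
  have hrow : ∀ k l, ∑ j, H k j * (starRingEnd ℂ) (H l j) =
      if k = l then (n : ℂ) else 0 := by
    intro k l
    have h1 := congrFun (congrFun hmul k) l
    rw [Matrix.mul_apply, Matrix.smul_apply, Matrix.one_apply] at h1
    simp only [Matrix.conjTranspose_apply, RCLike.star_def] at h1
    rw [h1]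
    split <;> simp
  -- the doubled vectors
  set w : Fin n → Fin n → (Fin n → ℂ) := fun k l j => H k j * H l j with hw
  have hsymm : ∀ k l, w k l = w l k := by
    intro k l; funext j; simp only [hw]; ring
  -- orthogonality within a "row" family
  have hA : ∀ k l l', sinner (w k l) (w k l') = if l = l' then (n : ℂ) else 0 := by
    intro k l l'
    have : ∀ j, (w k l j) * (starRingEnd ℂ) (w k l' j) =
        H l j * (starRingEnd ℂ) (H l' j) := by
      intro j
      simp only [hw, map_mul]
      calc H k j * H l j * ((starRingEnd ℂ) (H k j) * (starRingEnd ℂ) (H l' j))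
          = (H k j * (starRingEnd ℂ) (H k j)) * (H l j * (starRingEnd ℂ) (H l' j)) := by
            ring
        _ = H l j * (starRingEnd ℂ) (H l' j) := by rw [hunit, one_mul]
    rw [sinner, Finset.sum_congr rfl fun j _ => this j, hrow]
  -- orthogonality of the "diagonal" family
  have hB : ∀ k l, sinner (w k k) (w l l) = if k = l then (n : ℂ) else 0 := by
    intro k l
    by_cases hkl : k = l
    · subst hkl
      rw [hA k k k]
    · rw [if_neg hkl]
      have h2 := hsq k l hkl
      rw [sinner]
      rw [Finset.sum_congr rfl (fun j _ => ?_)]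
      · exact h2
      · simp only [hw, pow_two, map_mul]
  -- the indicator function
  set g : Fin n → Fin n → ℕ := fun k l => if f (w k l) = 1 then 1 else 0 with hg
  -- row sums are 1
  have hrowsum : ∀ k, ∑ l, g k l = 1 := by
    intro k
    obtain ⟨hinj, hbasis⟩ := aux_orth_basis (w k) (hA k)
    have h1 := aux_sum_one _ f (hf _ hbasis)
    rw [Finset.sum_image (fun x _ y _ h => hinj h)] at h1
    exact h1
  -- diagonal sum is 1
  have hdiagsum : ∑ k, g k k = 1 := by
    obtain ⟨hinj, hbasis⟩ := aux_orth_basis (fun k => w k k) hB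
    have h1 := aux_sum_one _ f (hf _ hbasis)
    rw [Finset.sum_image (fun x _ y _ h => hinj h)] at h1
    exact h1
  -- total sum is n
  have htot : ∑ k, ∑ l, g k l = n := by
    rw [Finset.sum_congr rfl fun k _ => hrowsum k]
    simp
  -- now the parity argument in ZMod 2
  set G : Fin n × Fin n → ZMod 2 := fun p => ((g p.1 p.2 : ℕ) : ZMod 2) with hG
  have hoff : ∑ p ∈ (Finset.univ ×ˢ Finset.univ).filter
      (fun p : Fin n × Fin n => p.1 ≠ p.2), G p = 0 := by
    apply Finset.sum_involution (fun p _ => (p.2, p.1))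
    · intro p hp
      have : g p.2 p.1 = g p.1 p.2 := by simp only [hg, hsymm p.1 p.2]
      simp only [hG, this]
      exact CharTwo.add_self_eq_zero _
    · intro p hp _
      simp only [Finset.mem_filter] at hp
      intro hcontra
      exact hp.2 (congrArg Prod.snd hcontra)
    · intro p hp
      simp only [Finset.mem_filter, Finset.mem_product] at hp ⊢
      exact ⟨⟨Finset.mem_univ _, Finset.mem_univ _⟩, fun h => hp.2 h.symm⟩
    · intro p hp
      rfl
  have hdiagfil : (Finset.univ ×ˢ Finset.univ).filter
      (fun p : Fin n × Fin n => ¬ p.1 ≠ p.2) =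
      Finset.image (fun k : Fin n => (k, k)) Finset.univ := by
    ext ⟨a, b⟩
    simp only [Finset.mem_filter, Finset.mem_product, Finset.mem_univ, true_and,
      Finset.mem_image, not_not, Prod.mk.injEq]
    constructor
    · rintro rfl
      exact ⟨a, rfl, rfl⟩
    · rintro ⟨k, rfl, rfl⟩
      rfl
  have hdiagG : ∑ p ∈ (Finset.univ ×ˢ Finset.univ).filter
      (fun p : Fin n × Fin n => ¬ p.1 ≠ p.2), G p = 1 := by
    rw [hdiagfil, Finset.sum_image (by intro x _ y _ h; exact (Prod.mk.injEq _ _ _ _ ▸ h).1)]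
    have : ∑ k : Fin n, G (k, k) = ((∑ k, g k k : ℕ) : ZMod 2) := by
      push_cast [hG]; rfl
    rw [this, hdiagsum]
    norm_num
  have hsplit := Finset.sum_filter_add_sum_filter_not (Finset.univ ×ˢ Finset.univ)
    (fun p : Fin n × Fin n => p.1 ≠ p.2) G
  rw [hoff, hdiagG, zero_add] at hsplit
  have htotG : ∑ p ∈ Finset.univ ×ˢ Finset.univ, G p = 0 := by
    rw [Finset.sum_product]
    have : ∑ k, ∑ l, G (k, l) = ((∑ k, ∑ l, g k l : ℕ) : ZMod 2) := by
      push_cast [hG]; rfl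
    rw [this, htot]
    obtain ⟨m, rfl⟩ := hn
    rw [show m + m = 2 * m from by ring, Nat.cast_mul,
      show ((2 : ℕ) : ZMod 2) = 0 from rfl, zero_mul]
  rw [htotG] at hsplit
  exact one_ne_zero hsplit
end

section
/- Suppose g > 2 and there exists a generalized Hadamard matrix GH(g, λ) over ℤ_g. Then there exists an S-Hadamard matrix of order gλ. -/
open scoped Classical

lemma sum_zmod_pow_eq_zero {g : ℕ} [NeZero g] (w : ℂ) (hw : w ^ g = 1) (hw1 : w ≠ 1) :
    ∑ a : ZMod g, w ^ a.val = 0 := by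
  have h : ∑ a : ZMod g, w ^ a.val = ∑ i ∈ Finset.range g, w ^ i := by
    refine Finset.sum_nbij' (fun a => a.val) (fun i => (i : ZMod g)) ?_ ?_ ?_ ?_ ?_
    · intro a _; exact Finset.mem_range.mpr (ZMod.val_lt a)
    · intro i _; exact Finset.mem_univ _
    · intro a _; exact ZMod.natCast_rightInverse a
    · intro i hi; exact ZMod.val_cast_of_lt (Finset.mem_range.mp hi)
    · intro a _; rfl
  rw [h, geom_sum_eq hw1, hw]
  simp

/-- If `g > 2` and a generalized Hadamard matrix GH(g,λ) over `ℤ_g` exists,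
then an S-Hadamard matrix of order `gλ` exists. -/
theorem exists_sHadamard_of_GH (g lam : ℕ) (hg : 2 < g)
    (hM : ∃ M : Matrix (Fin (g * lam)) (Fin (g * lam)) (ZMod g), IsGH g lam M) :
    ∃ H : Matrix (Fin (g * lam)) (Fin (g * lam)) ℂ, IsSHadamard H := by
  obtain ⟨M, hM⟩ := hM
  have hg0 : g ≠ 0 := by omega
  haveI : NeZero g := ⟨hg0⟩
  set ζ : ℂ := Complex.exp (2 * Real.pi * Complex.I / g) with hζdef
  have hζ : IsPrimitiveRoot ζ g := Complex.isPrimitiveRoot_exp g hg0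
  have hζg : ζ ^ g = 1 := hζ.pow_eq_one
  have hζne : ζ ≠ 0 := fun h => by simp [h, zero_pow hg0] at hζg
  have habs : ‖ζ‖ = 1 := by
    exact Complex.norm_eq_one_of_pow_eq_one hζg hg0
  have hζ1 : ζ ≠ 1 := by
    intro h
    have h2 : g ∣ 1 := (hζ.pow_eq_one_iff_dvd 1).mp (by rw [pow_one, h])
    exact absurd (Nat.le_of_dvd one_pos h2) (by omega)
  have hζ2 : ζ ^ 2 ≠ 1 := by
    intro h
    have h2 : g ∣ 2 := (hζ.pow_eq_one_iff_dvd 2).mp h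
    exact absurd (Nat.le_of_dvd two_pos h2) (by omega)
  have pow_mod : ∀ x : ℕ, ζ ^ (x % g) = ζ ^ x := by
    intro x
    conv_rhs => rw [← Nat.mod_add_div x g]
    rw [pow_add, pow_mul, hζg, one_pow, mul_one]
  set χ : ZMod g → ℂ := fun a => ζ ^ a.val with hχ
  have χ_add : ∀ a b, χ (a + b) = χ a * χ b := by
    intro a b
    simp only [hχ]
    rw [ZMod.val_add, pow_mod, pow_add]
  have χ_ne : ∀ a, χ a ≠ 0 := fun a => pow_ne_zero _ hζne
  have χ_abs : ∀ a, ‖χ a‖ = 1 := by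
    intro a; simp [hχ, map_pow, habs]
  have χ_zero : χ 0 = 1 := by simp [hχ]
  have χ_conj : ∀ a, (starRingEnd ℂ) (χ a) = χ (-a) := by
    intro a
    have h1 : χ a * χ (-a) = 1 := by rw [← χ_add]; simp [χ_zero]
    have h2 : χ a * (starRingEnd ℂ) (χ a) = 1 := by
      rw [Complex.mul_conj]
      norm_cast
      rw [Complex.normSq_eq_norm_sq, χ_abs]
      norm_num
    exact mul_left_cancel₀ (χ_ne a) (h2.trans h1.symm)
  -- the key counting lemma
  have key : ∀ (F : ZMod g → ℂ) (k l : Fin (g * lam)), k ≠ l →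
      ∑ j, F (M k j - M l j) = (lam : ℂ) * ∑ a : ZMod g, F a := by
    intro F k l hkl
    rw [← Finset.sum_fiberwise Finset.univ (fun j => M k j - M l j)
        (fun j => F (M k j - M l j)), Finset.mul_sum]
    refine Finset.sum_congr rfl fun a _ => ?_
    have : ∀ j ∈ Finset.univ.filter (fun j => M k j - M l j = a),
        F (M k j - M l j) = F a := fun j hj => by rw [(Finset.mem_filter.mp hj).2]
    rw [Finset.sum_congr rfl this, Finset.sum_const, hM k l hkl a, nsmul_eq_mul]
  have sumχ : ∑ a : ZMod g, χ a = 0 := sum_zmod_pow_eq_zero ζ hζg hζ1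
  have sumχ2 : ∑ a : ZMod g, χ (a + a) = 0 := by
    have : ∀ a : ZMod g, χ (a + a) = (ζ ^ 2) ^ a.val := by
      intro a
      rw [χ_add]
      simp only [hχ]
      ring
    rw [Finset.sum_congr rfl fun a _ => this a]
    exact sum_zmod_pow_eq_zero (ζ ^ 2) (by rw [← pow_mul, mul_comm, pow_mul, hζg, one_pow]) hζ2
  refine ⟨fun i j => χ (M i j), ?_, ?_, ?_⟩
  · ext k l
    erw [Matrix.mul_apply, Matrix.smul_apply, Matrix.one_apply]
    by_cases hkl : k = l
    · subst hkl
      simp only [if_true]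
      have : ∀ j, χ (M k j) * (Matrix.conjTranspose (fun i j => χ (M i j))) j k = 1 := by
        intro j
        erw [Matrix.conjTranspose_apply]
        have h2 : χ (M k j) * (starRingEnd ℂ) (χ (M k j)) = 1 := by
          rw [χ_conj, ← χ_add]; simp [χ_zero]
        exact h2
      rw [Finset.sum_congr rfl fun j _ => this j]
      simp
    · rw [if_neg hkl]
      have hterm : ∀ j, χ (M k j) * (Matrix.conjTranspose (fun i j => χ (M i j))) j l
          = χ (M k j - M l j) := by
        intro j
        erw [Matrix.conjTranspose_apply,
          show star (χ (M l j)) = χ (-(M l j)) from χ_conj _, ← χ_add, sub_eq_add_neg]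
      rw [Finset.sum_congr rfl fun j _ => hterm j, key χ k l hkl, sumχ]
      simp
  · intro i j; exact χ_abs _
  · intro k l hkl
    have hterm : ∀ j, (χ (M k j)) ^ 2 * (starRingEnd ℂ) ((χ (M l j)) ^ 2)
        = χ ((M k j - M l j) + (M k j - M l j)) := by
      intro j
      rw [map_pow, χ_conj, sq, sq, ← χ_add, ← χ_add, ← χ_add]
      congr 1
      ring
    rw [Finset.sum_congr rfl fun j _ => hterm j,
      key (fun d => χ (d + d)) k l hkl, sumχ2]
    simp
end
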